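/- Sum of log terms bound: Let λ > 0, L > 0, and x_1,…,xₙ ∈ ℝ^d with ‖x_i‖ ≤ L. With V_0 = λI and V_s = V_0 + Σ_{i≤s} x_i x_iᵀ, we have Σ_{s=1}^n log(1 + ‖x_s‖²_{V_{s-1}^{-1}}) ≤ d log(1 + nL²/(dλ)) ≤ d log(1 + nL²/λ). -/

import Mathlib

open Matrix Finset

lemma vmv_posSemidef {d : ℕ} (u : Fin d → ℝ) : (vecMulVec u u).PosSemidef := by
  refine Matrix.PosSemidef.of_dotProduct_mulVec_nonneg ?_ ?_
  · ext i j
    simp [vecMulVec_apply, conjTranspose_apply, mul_comm]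
  · intro y
    have h : star y ⬝ᵥ (vecMulVec u u) *ᵥ y = (u ⬝ᵥ y) ^ 2 := by
      simp only [star_trivial, dotProduct, mulVec, vecMulVec_apply, sq, Finset.sum_mul,
        Finset.mul_sum]
      exact Finset.sum_congr rfl fun i _ => Finset.sum_congr rfl fun j _ => by ring
    rw [h]; positivity

lemma smul_one_posDef {d : ℕ} {lam : ℝ} (h : 0 < lam) :
    (lam • (1 : Matrix (Fin d) (Fin d) ℝ)).PosDef := by
  have h1 := Matrix.PosDef.one (n := Fin d) (R := ℝ)
  refine Matrix.PosDef.of_dotProduct_mulVec_pos ?_ ?_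
  · unfold Matrix.IsHermitian
    rw [conjTranspose_smul, conjTranspose_one]
    simp
  · intro y hy
    have := h1.dotProduct_mulVec_pos hy
    simpa [smul_mulVec, dotProduct_smul] using mul_pos h this

lemma one_add_row_mul_col_det {d : ℕ} (B : Matrix (Fin d) (Fin d) ℝ) (u v : Fin d → ℝ) :
    ((1 : Matrix (Fin 1) (Fin 1) ℝ) + replicateRow (Fin 1) v * B * replicateCol (Fin 1) u).det
      = 1 + v ⬝ᵥ B *ᵥ u := by
  rw [det_unique, Matrix.add_apply, Matrix.one_apply_eq]
  congr 1
  simp only [Matrix.mul_apply, replicateRow_apply, replicateCol_apply, dotProduct, mulVec, Finset.sum_mul,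
    Finset.mul_sum]
  rw [Finset.sum_comm]
  exact Finset.sum_congr rfl fun i _ => Finset.sum_congr rfl fun j _ => by ring

lemma sum_psd {d : ℕ} {ι : Type*} (s : Finset ι) (f : ι → Matrix (Fin d) (Fin d) ℝ)
    (hf : ∀ i ∈ s, (f i).PosSemidef) : (∑ i ∈ s, f i).PosSemidef := by
  classical
  induction s using Finset.induction with
  | empty => simpa using Matrix.PosSemidef.zero
  | insert _ _ hnot ih =>
    rw [Finset.sum_insert hnot]
    exact (hf _ (Finset.mem_insert_self _ _)).add
      (ih fun i hi => hf i (Finset.mem_insert_of_mem hi))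

-- AM-GM for products
lemma prod_le_avg_pow {d : ℕ} (hd : 0 < d) (z : Fin d → ℝ) (hz : ∀ i, 0 ≤ z i) :
    ∏ i, z i ≤ ((∑ i, z i) / d) ^ d := by
  have hw : ∑ _i : Fin d, (1 / d : ℝ) = 1 := by
    simp [Finset.sum_const, Fintype.card_fin]
    field_simp
  have hgm := Real.geom_mean_le_arith_mean_weighted Finset.univ (fun _ => (1/d : ℝ)) z
    (fun _ _ => by positivity) hw (fun i _ => hz i)
  have key : (∏ i, z i ^ (1/d : ℝ)) ^ (d : ℕ) = ∏ i, z i := by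
    rw [← Finset.prod_pow]
    refine Finset.prod_congr rfl fun i _ => ?_
    rw [← Real.rpow_natCast (z i ^ (1/d:ℝ)) d, ← Real.rpow_mul (hz i)]
    rw [one_div, inv_mul_cancel₀ (by exact_mod_cast hd.ne'), Real.rpow_one]
  calc ∏ i, z i = (∏ i, z i ^ (1/d : ℝ)) ^ (d : ℕ) := key.symm
    _ ≤ (∑ i, (1/d : ℝ) * z i) ^ (d : ℕ) := by
        refine pow_le_pow_left₀ ?_ hgm d
        exact Finset.prod_nonneg fun i _ => Real.rpow_nonneg (hz i) _
    _ = ((∑ i, z i) / d) ^ d := by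
        rw [← Finset.mul_sum]
        congr 1
        ring

lemma trace_eq_sum_eigs {d : ℕ} {A : Matrix (Fin d) (Fin d) ℝ} (hA : A.IsHermitian) :
    A.trace = ∑ i, hA.eigenvalues i := by
  rw [hA.trace_eq_sum_eigenvalues]
  simp

lemma det_eq_prod_eigs {d : ℕ} {A : Matrix (Fin d) (Fin d) ℝ} (hA : A.IsHermitian) :
    A.det = ∏ i, hA.eigenvalues i := by
  simpa using hA.det_eq_prod_eigenvalues

/-- Sum of log terms bound: with `V₀ = λI` and `V_s = V₀ + Σ_{i≤s} x_i x_iᵀ`,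
`Σ_{s=1}^n log(1 + ‖x_s‖²_{V_{s-1}⁻¹}) ≤ d log(1 + nL²/(dλ)) ≤ d log(1 + nL²/λ)`. -/
theorem sum_log_le (d n : ℕ) (hd : 0 < d) (lam L : ℝ) (hlam : 0 < lam) (hL : 0 < L)
    (x : Fin n → Fin d → ℝ) (hx : ∀ i, Real.sqrt (∑ j, x i j ^ 2) ≤ L)
    (V : ℕ → Matrix (Fin d) (Fin d) ℝ)
    (hV : ∀ s : ℕ, V s = lam • (1 : Matrix (Fin d) (Fin d) ℝ) +
      ∑ i ∈ Finset.univ.filter (fun i : Fin n => (i : ℕ) < s), vecMulVec (x i) (x i)) :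
    (∑ s : Fin n, Real.log (1 + x s ⬝ᵥ (V (s : ℕ))⁻¹ *ᵥ x s)
        ≤ d * Real.log (1 + n * L ^ 2 / (d * lam)))
    ∧ (d : ℝ) * Real.log (1 + n * L ^ 2 / (d * lam))
        ≤ d * Real.log (1 + n * L ^ 2 / lam) := by
  have hd' : (0:ℝ) < d := by exact_mod_cast hd
  have hVpos : ∀ s : ℕ, (V s).PosDef := by
    intro s
    rw [hV s]
    exact (smul_one_posDef hlam).add_posSemidef
      (sum_psd _ _ fun i _ => vmv_posSemidef (x i))
  have hdet_pos : ∀ s : ℕ, 0 < (V s).det := fun s => (hVpos s).det_pos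
  set q : Fin n → ℝ := fun s => x s ⬝ᵥ (V (s:ℕ))⁻¹ *ᵥ x s with hq
  have hq_nonneg : ∀ s, 0 ≤ q s := by
    intro s
    have := ((hVpos s).inv).posSemidef.dotProduct_mulVec_nonneg (x s)
    simpa using this
  have hstep : ∀ s : Fin n, V ((s:ℕ)+1) = V (s:ℕ) + vecMulVec (x s) (x s) := by
    intro s
    rw [hV, hV, add_assoc]
    congr 1
    have hins : (Finset.univ.filter (fun i : Fin n => (i:ℕ) < (s:ℕ)+1))
        = insert s (Finset.univ.filter (fun i : Fin n => (i:ℕ) < (s:ℕ))) := by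
      ext i
      simp only [Finset.mem_insert, Finset.mem_filter, Finset.mem_univ, true_and,
        Nat.lt_succ_iff_lt_or_eq, Fin.ext_iff]
      tauto
    rw [hins, Finset.sum_insert (by simp), add_comm]
  have hdet : ∀ s : Fin n, (V ((s:ℕ)+1)).det = (V (s:ℕ)).det * (1 + q s) := by
    intro s
    rw [hstep s, vecMulVec_eq (Fin 1),
      det_add_replicateCol_mul_replicateRow (isUnit_iff_ne_zero.mpr (hdet_pos s).ne')]
    congr 1
    exact one_add_row_mul_col_det (V (s:ℕ))⁻¹ (x s) (x s)
  have hlog : ∀ s : Fin n, Real.log (1 + q s)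
      = Real.log ((V ((s:ℕ)+1)).det) - Real.log ((V (s:ℕ)).det) := by
    intro s
    have h1 : (0:ℝ) < 1 + q s := by have := hq_nonneg s; linarith
    rw [hdet s, Real.log_mul (hdet_pos s).ne' h1.ne']
    ring
  have hsum : ∑ s : Fin n, Real.log (1 + q s)
      = Real.log ((V n).det) - Real.log ((V 0).det) := by
    calc ∑ s : Fin n, Real.log (1 + q s)
        = ∑ s : Fin n, (Real.log ((V ((s:ℕ)+1)).det) - Real.log ((V (s:ℕ)).det)) :=
          Finset.sum_congr rfl fun s _ => hlog s
      _ = ∑ i ∈ Finset.range n,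
            (Real.log ((V (i+1)).det) - Real.log ((V i).det)) :=
          Fin.sum_univ_eq_sum_range
            (fun i => Real.log ((V (i+1)).det) - Real.log ((V i).det)) n
      _ = _ := Finset.sum_range_sub (fun i => Real.log ((V i).det)) n
  have hV0 : (V 0).det = lam ^ d := by
    rw [hV 0]
    have he : (Finset.univ.filter fun i : Fin n => (i:ℕ) < 0) = ∅ := by simp
    rw [he, Finset.sum_empty, add_zero, Matrix.det_smul, det_one, mul_one]
    simp
  -- trace bound
  have htr : (V n).trace ≤ d * lam + n * L ^ 2 := by
    rw [hV n, trace_add, trace_smul, trace_one, trace_sum]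
    have hvt : ∀ i : Fin n, (vecMulVec (x i) (x i)).trace ≤ L ^ 2 := by
      intro i
      have h1 : (vecMulVec (x i) (x i)).trace = ∑ j, x i j ^ 2 := by
        simp [Matrix.trace, Matrix.diag, vecMulVec_apply, sq]
      rw [h1]
      have h2 : ∑ j, x i j ^ 2 = Real.sqrt (∑ j, x i j ^ 2) ^ 2 :=
        (Real.sq_sqrt (by positivity)).symm
      rw [h2]
      exact pow_le_pow_left₀ (Real.sqrt_nonneg _) (hx i) 2
    have h3 : ∑ i ∈ Finset.univ.filter (fun i : Fin n => (i:ℕ) < n),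
        (vecMulVec (x i) (x i)).trace ≤ n * L ^ 2 := by
      calc ∑ i ∈ Finset.univ.filter (fun i : Fin n => (i:ℕ) < n),
            (vecMulVec (x i) (x i)).trace
          ≤ ∑ _i ∈ Finset.univ.filter (fun i : Fin n => (i:ℕ) < n), L ^ 2 :=
            Finset.sum_le_sum fun i _ => hvt i
        _ = (Finset.univ.filter (fun i : Fin n => (i:ℕ) < n)).card * L ^ 2 := by
            rw [Finset.sum_const, nsmul_eq_mul]
        _ ≤ n * L ^ 2 := by
            have : (Finset.univ.filter (fun i : Fin n => (i:ℕ) < n)).card ≤ n := by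
              simpa using (Finset.card_filter_le Finset.univ _)
            have hL2 : (0:ℝ) ≤ L ^ 2 := by positivity
            have := mul_le_mul_of_nonneg_right (show ((Finset.univ.filter
              (fun i : Fin n => (i:ℕ) < n)).card : ℝ) ≤ n by exact_mod_cast this) hL2
            linarith
    have hcs : (Fintype.card (Fin d) : ℝ) = d := by simp
    rw [hcs, smul_eq_mul]
    linarith [h3]
  -- determinant bound via AM-GM
  have hdetVn : (V n).det ≤ (lam + n * L ^ 2 / d) ^ d := by
    have hH := (hVpos n).1
    have heig : ∀ i, 0 ≤ hH.eigenvalues i := fun i => ((hVpos n).eigenvalues_pos i).le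
    have havg : (∑ i, hH.eigenvalues i) / d ≤ lam + n * L ^ 2 / d := by
      have := trace_eq_sum_eigs hH
      rw [← this]
      rw [div_le_iff₀ hd']
      have : (lam + n * L ^ 2 / d) * d = d * lam + n * L ^ 2 := by
        field_simp
      rw [this]
      exact htr
    calc (V n).det = ∏ i, hH.eigenvalues i := det_eq_prod_eigs hH
      _ ≤ ((∑ i, hH.eigenvalues i) / d) ^ d := prod_le_avg_pow hd _ heig
      _ ≤ (lam + n * L ^ 2 / d) ^ d := by
          refine pow_le_pow_left₀ ?_ havg d
          have : 0 ≤ ∑ i, hH.eigenvalues i := Finset.sum_nonneg fun i _ => heig i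
          positivity
  have hbase : (0:ℝ) < lam + n * L ^ 2 / d := by positivity
  have hfin : Real.log ((V n).det) ≤ d * Real.log (lam + n * L ^ 2 / d) := by
    calc Real.log ((V n).det) ≤ Real.log ((lam + n * L ^ 2 / d) ^ d) :=
          Real.log_le_log (hdet_pos n) hdetVn
      _ = d * Real.log (lam + n * L ^ 2 / d) := by rw [Real.log_pow]
  have hkey : Real.log (1 + n * L ^ 2 / (d * lam))
      = Real.log (lam + n * L ^ 2 / d) - Real.log lam := by
    rw [← Real.log_div hbase.ne' hlam.ne']
    congr 1
    field_simp
  constructor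
  · have hV0log : Real.log ((V 0).det) = d * Real.log lam := by
      rw [hV0, Real.log_pow]
    calc ∑ s : Fin n, Real.log (1 + q s)
        = Real.log ((V n).det) - Real.log ((V 0).det) := hsum
      _ ≤ d * Real.log (lam + n * L ^ 2 / d) - d * Real.log lam := by
          rw [hV0log]; linarith
      _ = d * Real.log (1 + n * L ^ 2 / (d * lam)) := by rw [hkey]; ring
  · have harg : 1 + n * L ^ 2 / (d * lam) ≤ 1 + n * L ^ 2 / lam := by
      have h1 : n * L ^ 2 / (d * lam) ≤ n * L ^ 2 / lam := by
        apply div_le_div_of_nonneg_left (by positivity) hlam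
        have hd1 : (1:ℝ) ≤ d := by exact_mod_cast hd
        nlinarith
      linarith
    have := Real.log_le_log (by positivity) harg
    have hd0 : (0:ℝ) ≤ d := hd'.le
    nlinarith [this]
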